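/- If H is a conjugate-permutable subgroup of a group G and H has prime index in the subgroup H·H^x, then H is normal in H·H^x. -/

import Mathlib

open Pointwise

/-- `H` is conjugate-permutable in `G`. -/
def IsConjPermutable {G : Type*} [Group G] (H : Subgroup G) : Prop :=
  ∀ x : G, (H : Set G) * ((fun g => x⁻¹ * g * x) '' (H : Set G)) =
    ((fun g => x⁻¹ * g * x) '' (H : Set G)) * (H : Set G)

theorem prime_index_implies_normal {G : Type*} [Group G]
    (H : Subgroup G) (hH : IsConjPermutable H) (x : G) (K : Subgroup G)
    (hK : (K : Set G) = (H : Set G) * ((fun g => x⁻¹ * g * x) '' (H : Set G)))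
    (hle : H ≤ K) (hprime : Nat.Prime ((H.subgroupOf K).index)) :
    (H.subgroupOf K).Normal := by
  have key : ∀ k ∈ K, ∀ h ∈ H, k⁻¹ * h * k ∈ H := by
    intro k hk
    set Cs : Set G := (fun g => k⁻¹ * g * k) '' (H : Set G) with hCs
    have hperm : (H : Set G) * Cs = Cs * (H : Set G) := hH k
    have one_mem : (1 : G) ∈ (H : Set G) * Cs :=
      ⟨1, H.one_mem, 1, ⟨1, H.one_mem, by group⟩, by group⟩
    have mul_mem : ∀ {a b : G}, a ∈ (H : Set G) * Cs → b ∈ (H : Set G) * Cs →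
        a * b ∈ (H : Set G) * Cs := by
      rintro a b ⟨h1, hh1, c1, hc1, rfl⟩ ⟨h2, hh2, c2, hc2, rfl⟩
      have hmem : c1 * h2 ∈ (H : Set G) * Cs := by
        rw [hperm]; exact ⟨c1, hc1, h2, hh2, rfl⟩
      obtain ⟨h3, hh3, c3, hc3, hEq⟩ := hmem
      refine ⟨h1 * h3, H.mul_mem hh1 hh3, c3 * c2, ?_, ?_⟩
      · obtain ⟨a3, ha3, rfl⟩ := hc3
        obtain ⟨a2, ha2, rfl⟩ := hc2
        exact ⟨a3 * a2, H.mul_mem ha3 ha2, by group⟩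
      · have hEq' : h3 * c3 = c1 * h2 := hEq
        show h1 * h3 * (c3 * c2) = h1 * c1 * (h2 * c2)
        rw [show h1 * h3 * (c3 * c2) = h1 * (h3 * c3) * c2 by group, hEq']; group
    have inv_mem : ∀ {a : G}, a ∈ (H : Set G) * Cs → a⁻¹ ∈ (H : Set G) * Cs := by
      rintro a ⟨h1, hh1, c1, hc1, rfl⟩
      have hmem : c1⁻¹ * h1⁻¹ ∈ Cs * (H : Set G) := by
        refine ⟨c1⁻¹, ?_, h1⁻¹, H.inv_mem hh1, rfl⟩
        obtain ⟨a1, ha1, rfl⟩ := hc1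
        exact ⟨a1⁻¹, H.inv_mem ha1, by group⟩
      rw [← hperm] at hmem
      rw [mul_inv_rev]; exact hmem
    set L : Subgroup G :=
      { carrier := (H : Set G) * Cs
        one_mem' := one_mem
        mul_mem' := fun ha hb => mul_mem ha hb
        inv_mem' := fun ha => inv_mem ha } with hL
    have hHL : H ≤ L := fun h hh => ⟨h, hh, 1, ⟨1, H.one_mem, by group⟩, by group⟩
    have hCL : Cs ⊆ (L : Set G) := fun c hc => ⟨1, H.one_mem, c, hc, by group⟩
    have hLK : L ≤ K := by
      rintro a ⟨h1, hh1, c1, ⟨a1, ha1, rfl⟩, rfl⟩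
      exact K.mul_mem (hle hh1) (K.mul_mem (K.mul_mem (K.inv_mem hk) (hle ha1)) hk)
    have hmul : H.relIndex L * L.relIndex K = H.relIndex K :=
      Subgroup.relIndex_mul_relIndex (H := H) (K := L) (L := K) hHL hLK
    have hrk : H.relIndex K = (H.subgroupOf K).index := rfl
    rw [hrk] at hmul
    have hdvd : H.relIndex L ∣ (H.subgroupOf K).index := ⟨_, hmul.symm⟩
    rcases hprime.eq_one_or_self_of_dvd _ hdvd with h1 | hp
    · have hLH : L ≤ H := Subgroup.relIndex_eq_one.mp h1
      intro h hh
      exact hLH (hCL ⟨h, hh, rfl⟩)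
    · have hb : L.relIndex K = 1 := by
        rw [hp] at hmul
        have hpos : 0 < (H.subgroupOf K).index := hprime.pos
        exact Nat.eq_of_mul_eq_mul_left hpos (hmul.trans (Nat.mul_one _).symm)
      have hKL2 : K ≤ L := Subgroup.relIndex_eq_one.mp hb
      obtain ⟨h1, hh1, c1, ⟨a1, ha1, rfl⟩, hEq⟩ := hKL2 hk
      have hkH : k ∈ H := by
        have hEq' : h1 * (k⁻¹ * a1 * k) = k := hEq
        have e2 : h1 * k⁻¹ * a1 = 1 := by
          refine mul_right_cancel (b := k) ?_
          rw [one_mul]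
          calc (h1 * k⁻¹ * a1) * k = h1 * (k⁻¹ * a1 * k) := by group
            _ = k := hEq'
        have e4 : k = a1 * h1 := by
          have e5 : a1 = (h1 * k⁻¹)⁻¹ := eq_inv_of_mul_eq_one_right e2
          rw [e5]; group
        rw [e4]; exact H.mul_mem ha1 hh1
      intro h hh
      exact H.mul_mem (H.mul_mem (H.inv_mem hkH) hh) hkH
  constructor
  intro n hn g
  rw [Subgroup.mem_subgroupOf] at hn ⊢
  have := key (g : G)⁻¹ (K.inv_mem g.2) (n : G) hn
  simpa [mul_assoc] using this
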